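/- arXiv:cs/0510009 — 2 statements merged into one kernel-verified Lean document; each statement's English description precedes it below -/
import Mathlib

section
/- Let p be an odd prime, q = p^s, F = GF(q). In the binary code of the Type I-B graph G(p,s), the indicator vector of the set {(0,j) : j ∈ F \ {0}} ∪ {v_y : y ∈ F \ {0}} is a codeword of Hamming weight 2(q − 1). Consequently the minimum distance d_min of this binary code satisfies q + 1 ≤ d_min ≤ 2(q − 1). -/
open scoped Classical

namespace TypeIB

/-- The nonzero elements of `F`. -/
abbrev Fstar (F : Type*) [Field F] := {j : F // j ≠ 0}

/-- Variable nodes of the Type I-B graph: the root `r`, the nodes `v_y` (y ∈ F) and the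
nodes `(i,j)` with `i ∈ F`, `j ∈ F \ {0}`. -/
abbrev VN (F : Type*) [Field F] := Unit ⊕ (F ⊕ (F × Fstar F))

/-- Constraint nodes of the Type I-B graph: the root `r'`, the nodes `c_i` (i ∈ F) and the
nodes `(i,j)'` with `i ∈ F`, `j ∈ F \ {0}`. -/
abbrev CN (F : Type*) [Field F] := Unit ⊕ (F ⊕ (F × Fstar F))

/-- Adjacency of the Type I-B graph `G(p,s)`:
`r ~ c_i` for every `i`; `c_i ~ (i,j)` for every `j ≠ 0`; `r' ~ v_y` for every `y`;
`v_y ~ (y,j)'` for every `j ≠ 0`; and `(i,j) ~ (k, j + i·k)'` whenever `j + i·k ≠ 0`,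
except that the edges `(0,j) ~ (0,j)'` are omitted. -/
def adj (F : Type*) [Field F] : VN F → CN F → Prop
  | Sum.inl _, Sum.inl _ => False
  | Sum.inl _, Sum.inr (Sum.inl _) => True              -- r ~ c_i
  | Sum.inl _, Sum.inr (Sum.inr _) => False
  | Sum.inr (Sum.inl _), Sum.inl _ => True              -- v_y ~ r'
  | Sum.inr (Sum.inl _), Sum.inr (Sum.inl _) => False
  | Sum.inr (Sum.inl y), Sum.inr (Sum.inr (a, _)) => a = y   -- v_y ~ (y,b)'
  | Sum.inr (Sum.inr _), Sum.inl _ => False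
  | Sum.inr (Sum.inr (i, _)), Sum.inr (Sum.inl k) => k = i   -- c_i ~ (i,j)
  | Sum.inr (Sum.inr (i, j)), Sum.inr (Sum.inr (a, b)) =>
      (b : F) = (j : F) + i * a ∧ ¬(i = 0 ∧ a = 0)

end TypeIB

/-- Hamming weight of a vector: the number of nonzero coordinates. -/
noncomputable def hamWt {V K : Type*} [Zero K] (x : V → K) : ℕ :=
  Nat.card {v : V // x v ≠ 0}

namespace TypeIB

/-- The code of the Type I-B graph over `K`: vectors indexed by the variable nodes whose sum
over the neighbourhood of each constraint node vanishes. -/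
def InCode (F : Type*) [Field F] [Fintype F] (K : Type*) [AddCommMonoid K]
    (x : VN F → K) : Prop :=
  ∀ c : CN F, (∑ v : VN F, if adj F v c then x v else 0) = 0

/-- The minimum distance of the code of the Type I-B graph over `K`: the least Hamming
weight of a nonzero codeword. -/
noncomputable def dmin (F : Type*) [Field F] [Fintype F]
    (K : Type*) [AddCommMonoid K] : ℕ :=
  sInf {w | ∃ x : VN F → K, InCode F K x ∧ x ≠ 0 ∧ hamWt x = w}

end TypeIB

/-- The indicator vector of the set `{(0,j) : j ∈ F \ {0}} ∪ {v_y : y ∈ F \ {0}}`. -/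
noncomputable def cw (F : Type*) [Field F] : TypeIB.VN F → ZMod 2
  | Sum.inl _ => 0
  | Sum.inr (Sum.inl y) => if y = 0 then 0 else 1
  | Sum.inr (Sum.inr (i, _)) => if i = 0 then 1 else 0

namespace TypeIBProof
open TypeIB Finset

variable {F : Type*} [Field F] [Fintype F]

def R : VN F := Sum.inl ()
def V (y : F) : VN F := Sum.inr (Sum.inl y)
def N (i : F) (j : Fstar F) : VN F := Sum.inr (Sum.inr (i, j))

lemma R_ne_N (i : F) (j : Fstar F) : (R : VN F) ≠ N i j := by simp [R, N]

lemma V_ne_N (y i : F) (j : Fstar F) : (V y : VN F) ≠ N i j := by simp [V, N]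

lemma V_inj {y y' : F} (h : (V y : VN F) = V y') : y = y' := by simpa [V] using h

lemma N_inj {i i' : F} {j j' : Fstar F} (h : (N i j : VN F) = N i' j') :
    i = i' ∧ j = j' := by
  simpa [N, Prod.ext_iff] using h

lemma code_r' (x : VN F → ZMod 2) (hx : InCode F (ZMod 2) x) :
    ∑ y : F, x (V y) = 0 := by
  have h := hx (Sum.inl ())
  simpa [Fintype.sum_sum_type, adj, V] using h

lemma code_c (x : VN F → ZMod 2) (hx : InCode F (ZMod 2) x) (i : F) :
    x R + ∑ j : Fstar F, x (N i j) = 0 := by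
  have h := hx (Sum.inr (Sum.inl i))
  simpa [Fintype.sum_sum_type, Fintype.sum_prod_type_right, adj, R, N,
    Finset.sum_ite_eq] using h

lemma code_ab (x : VN F → ZMod 2) (hx : InCode F (ZMod 2) x) (a : F) (b : Fstar F) :
    x (V a) + ∑ q : F × Fstar F,
      (if ((b : F) = (q.2 : F) + q.1 * a ∧ ¬(q.1 = 0 ∧ a = 0)) then x (N q.1 q.2) else 0)
      = 0 := by
  have h := hx (Sum.inr (Sum.inr (a, b)))
  simp [Fintype.sum_sum_type, adj] at h
  refine Eq.trans ?_ h
  refine congrArg₂ (· + ·) rfl (Finset.sum_congr rfl fun q _ => ?_)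
  by_cases hc : (b : F) = (q.2 : F) + q.1 * a ∧ ¬(q.1 = 0 ∧ a = 0)
  · rw [if_pos hc, if_pos (by tauto)]; rfl
  · rw [if_neg hc, if_neg (by tauto)]

lemma hamWt_eq (x : VN F → ZMod 2) :
    hamWt x = (univ.filter fun v : VN F => x v ≠ 0).card := by
  classical
  rw [hamWt, Nat.card_eq_fintype_card, Fintype.card_subtype]

lemma card_Fstar : Fintype.card (Fstar F) = Fintype.card F - 1 := by
  classical
  have h := Fintype.card_subtype_compl (fun j : F => j = 0)
  have h2 : Fintype.card {j : F // j = 0} = 1 := Fintype.card_subtype_eq (0 : F)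
  rw [h2] at h
  calc Fintype.card (Fstar F) = Fintype.card {j : F // ¬ j = 0} := Fintype.card_congr (Equiv.refl _)
    _ = Fintype.card F - 1 := h

/-- Main lower bound: any nonzero binary codeword has weight at least `q + 1`. -/
lemma lower_bound (x : VN F → ZMod 2) (hx : InCode F (ZMod 2) x) (hne : x ≠ 0) :
    Fintype.card F + 1 ≤ hamWt x := by
  classical
  rw [hamWt_eq]
  set S := univ.filter fun v : VN F => x v ≠ 0 with hS
  have memS : ∀ v, x v ≠ 0 → v ∈ S := fun v h => by simp [hS, h]
  have hq1 : 1 ≤ Fintype.card F := Fintype.card_pos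
  by_cases hr : x R = 0
  · by_cases hv : ∃ a : F, x (V a) ≠ 0
    · -- Case B: some v_a is in the support
      obtain ⟨a, ha⟩ := hv
      have key : ∀ b : Fstar F, ∃ q : F × Fstar F,
          ((b : F) = (q.2 : F) + q.1 * a) ∧ x (N q.1 q.2) ≠ 0 := by
        intro b
        by_contra hcon
        push_neg at hcon
        have h := code_ab x hx a b
        have hz : ∀ q : F × Fstar F,
            (if ((b : F) = (q.2 : F) + q.1 * a ∧ ¬(q.1 = 0 ∧ a = 0)) then x (N q.1 q.2) else 0) = 0 := by
          intro q
          by_cases hc : (b : F) = (q.2 : F) + q.1 * a ∧ ¬(q.1 = 0 ∧ a = 0)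
          · rw [if_pos hc]; exact hcon q hc.1
          · rw [if_neg hc]
        rw [Finset.sum_congr rfl fun q _ => hz q, Finset.sum_const_zero, add_zero] at h
        exact ha h
      choose g hg1 hg2 using key
      obtain ⟨y, hy, hxy⟩ : ∃ y : F, y ≠ a ∧ x (V y) ≠ 0 := by
        by_contra hcon
        push_neg at hcon
        have h := code_r' x hx
        rw [Finset.sum_eq_single a (fun y _ hy => hcon y hy) (by simp)] at h
        exact ha h
      set T : Finset (VN F) :=
        insert (V a) (insert (V y) (univ.image fun b : Fstar F => N (g b).1 (g b).2)) with hT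
      have hsub : T ⊆ S := by
        intro v hv
        rw [hT, Finset.mem_insert, Finset.mem_insert] at hv
        rcases hv with rfl | rfl | hv
        · exact memS _ ha
        · exact memS _ hxy
        · obtain ⟨b, _, rfl⟩ := Finset.mem_image.1 hv
          exact memS _ (hg2 b)
      have hinj : Function.Injective fun b : Fstar F => (N (g b).1 (g b).2 : VN F) := by
        intro b b' h
        obtain ⟨h1, h2⟩ := N_inj h
        apply Subtype.ext
        rw [hg1 b, hg1 b', h1, h2]
      have hcard : T.card = Fintype.card F + 1 := by
        rw [hT, Finset.card_insert_of_notMem, Finset.card_insert_of_notMem,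
          Finset.card_image_of_injective _ hinj, Finset.card_univ, card_Fstar]
        · omega
        · -- V y ∉ image
          intro hmem
          obtain ⟨b, -, hb⟩ := Finset.mem_image.1 hmem
          exact V_ne_N y _ _ hb.symm
        · -- V a ∉ insert (V y) image
          intro hmem
          rcases Finset.mem_insert.1 hmem with heq | himg
          · exact hy (V_inj heq).symm
          · obtain ⟨b, -, hb⟩ := Finset.mem_image.1 himg
            exact V_ne_N a _ _ hb.symm
      calc Fintype.card F + 1 = T.card := hcard.symm
        _ ≤ S.card := Finset.card_le_card hsub
    · -- Case C: support only on the (i,j) nodes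
      push_neg at hv
      obtain ⟨i₀, j₀, h0⟩ : ∃ (i₀ : F) (j₀ : Fstar F), x (N i₀ j₀) ≠ 0 := by
        by_contra hcon
        push_neg at hcon
        apply hne
        funext v
        show x v = 0
        rcases v with u | y | ⟨i, j⟩
        · exact hr
        · exact hv y
        · exact hcon i j
      obtain ⟨j₁, hj1, hxj1⟩ : ∃ j₁ : Fstar F, j₁ ≠ j₀ ∧ x (N i₀ j₁) ≠ 0 := by
        by_contra hcon
        push_neg at hcon
        have h := code_c x hx i₀
        rw [hr, zero_add, Finset.sum_eq_single j₀ (fun j _ hj => hcon j hj) (by simp)] at h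
        exact h0 h
      set w : F := if i₀ = 0 then 0 else -((j₀ : F) * i₀⁻¹) with hw
      set A : Finset F := univ.filter fun a => a ≠ w with hA
      have hAmem : ∀ a ∈ A, ((j₀ : F) + i₀ * a ≠ 0) ∧ ¬(i₀ = 0 ∧ a = 0) := by
        intro a haA
        rw [hA, Finset.mem_filter] at haA
        by_cases h0' : i₀ = 0
        · subst h0'
          refine ⟨by simpa using j₀.2, ?_⟩
          rintro ⟨-, rfl⟩
          exact haA.2 (by rw [hw, if_pos rfl])
        · refine ⟨?_, fun hc => h0' hc.1⟩
          intro hcon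
          apply haA.2
          rw [hw, if_neg h0']
          field_simp
          linear_combination hcon
      have hAcard : A.card = Fintype.card F - 1 := by
        rw [hA, Finset.filter_ne', Finset.card_erase_of_mem (Finset.mem_univ _), Finset.card_univ]
      have key : ∀ a ∈ A, ∃ q : F × Fstar F, q ≠ (i₀, j₀) ∧
          ((j₀ : F) + i₀ * a = (q.2 : F) + q.1 * a) ∧ x (N q.1 q.2) ≠ 0 := by
        intro a haA
        obtain ⟨hb0, hcond⟩ := hAmem a haA
        by_contra hcon
        push_neg at hcon
        have h := code_ab x hx a ⟨(j₀ : F) + i₀ * a, hb0⟩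
        rw [hv a, zero_add] at h
        rw [Finset.sum_eq_single ((i₀, j₀) : F × Fstar F) ?_ (by simp)] at h
        · rw [if_pos ⟨rfl, hcond⟩] at h
          exact h0 h
        · intro q _ hq
          by_cases hc : (((j₀ : F) + i₀ * a : F) = (q.2 : F) + q.1 * a ∧ ¬(q.1 = 0 ∧ a = 0))
          · rw [if_pos hc]
            exact hcon q hq hc.1
          · rw [if_neg hc]
      choose g hg1 hg2 hg3 using key
      have hgne : ∀ a (ha : a ∈ A), (g a ha).1 ≠ i₀ := by
        intro a ha hcon
        apply hg1 a ha
        have h2 := hg2 a ha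
        rw [hcon] at h2
        have hj : ((g a ha).2 : F) = (j₀ : F) := by linear_combination -h2
        exact Prod.ext hcon (Subtype.ext hj)
      set B : Finset (VN F) := A.attach.image fun a => N (g a.1 a.2).1 (g a.1 a.2).2 with hB
      have hBinj : Set.InjOn (fun a : {z // z ∈ A} => (N (g a.1 a.2).1 (g a.1 a.2).2 : VN F))
          A.attach := by
        intro a _ a' _ h
        obtain ⟨h1, h2⟩ := N_inj h
        have e1 := hg2 a.1 a.2
        have e2 := hg2 a'.1 a'.2
        have hmul : ((g a.1 a.2).1 - i₀) * (a.1 - a'.1) = 0 := by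
          have h2' : ((g a.1 a.2).2 : F) = ((g a'.1 a'.2).2 : F) := by rw [h2]
          linear_combination e2 - e1 - h2' - ((a' : F) : F) * h1
        rcases mul_eq_zero.1 hmul with hcase | hcase
        · exact absurd (sub_eq_zero.1 hcase) (hgne a.1 a.2)
        · exact Subtype.ext (sub_eq_zero.1 hcase)
      have hBcard : B.card = Fintype.card F - 1 := by
        rw [hB, Finset.card_image_of_injOn hBinj, Finset.card_attach, hAcard]
      have hnotB : ∀ j : Fstar F, (N i₀ j : VN F) ∉ B := by
        intro j hj
        rw [hB, Finset.mem_image] at hj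
        obtain ⟨a, _, ha⟩ := hj
        exact hgne a.1 a.2 (N_inj ha).1
      set T : Finset (VN F) := insert (N i₀ j₀) (insert (N i₀ j₁) B) with hT
      have hsub : T ⊆ S := by
        intro v hv'
        rw [hT, Finset.mem_insert, Finset.mem_insert] at hv'
        rcases hv' with rfl | rfl | hv'
        · exact memS _ h0
        · exact memS _ hxj1
        · rw [hB, Finset.mem_image] at hv'
          obtain ⟨a, _, rfl⟩ := hv'
          exact memS _ (hg3 a.1 a.2)
      have hcard : T.card = Fintype.card F + 1 := by
        rw [hT, Finset.card_insert_of_notMem, Finset.card_insert_of_notMem (hnotB j₁), hBcard]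
        · omega
        · simp only [Finset.mem_insert, not_or]
          refine ⟨fun h => ?_, hnotB j₀⟩
          exact hj1 ((N_inj h.symm).2)
      calc Fintype.card F + 1 = T.card := hcard.symm
        _ ≤ S.card := Finset.card_le_card hsub
  · -- Case A: the root is in the support
    have key : ∀ i : F, ∃ j : Fstar F, x (N i j) ≠ 0 := by
      intro i
      by_contra hcon
      push_neg at hcon
      have h := code_c x hx i
      simp [hcon] at h
      exact hr h
    choose g hg using key
    have hinj : Function.Injective fun i : F => (N i (g i) : VN F) := by
      intro i i' h
      exact (N_inj h).1
    set T : Finset (VN F) := insert R (univ.image fun i : F => N i (g i)) with hT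
    have hsub : T ⊆ S := by
      intro v hv'
      rw [hT, Finset.mem_insert] at hv'
      rcases hv' with rfl | hv'
      · exact memS _ hr
      · obtain ⟨i, _, rfl⟩ := Finset.mem_image.1 hv'
        exact memS _ (hg i)
    have hcard : T.card = Fintype.card F + 1 := by
      rw [hT, Finset.card_insert_of_notMem, Finset.card_image_of_injective _ hinj,
        Finset.card_univ]
      intro hmem
      obtain ⟨i, -, hb⟩ := Finset.mem_image.1 hmem
      exact R_ne_N _ _ hb.symm
    calc Fintype.card F + 1 = T.card := hcard.symm
      _ ≤ S.card := Finset.card_le_card hsub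

end TypeIBProof
namespace TypeIBProof
open TypeIB Finset

variable {F : Type*} [Field F] [Fintype F]

lemma card_cast_zero (hodd : ¬ 2 ∣ Fintype.card F) :
    ((Fintype.card F - 1 : ℕ) : ZMod 2) = 0 := by
  rw [ZMod.natCast_eq_zero_iff]
  have := Fintype.card_pos (α := F)
  omega

lemma card_cast_one (hodd : ¬ 2 ∣ Fintype.card F) :
    ((Fintype.card F : ℕ) : ZMod 2) = 1 := by
  rw [← ZMod.natCast_mod]
  have h : Fintype.card F % 2 = 1 := Nat.two_dvd_ne_zero.mp hodd
  rw [h, Nat.cast_one]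

lemma cw_incode (hodd : ¬ 2 ∣ Fintype.card F) : InCode F (ZMod 2) (cw F) := by
  classical
  intro c
  rcases c with u | i | ⟨a, b⟩
  · -- constraint r'
    have hst : (∑ v : VN F, if adj F v (Sum.inl u) then cw F v else 0)
        = ∑ y : F, (if y = 0 then (0 : ZMod 2) else 1) := by
      simp [Fintype.sum_sum_type, adj, cw]
    rw [hst]
    have h1 : ∀ y : F, (if y = 0 then (0 : ZMod 2) else 1)
        = 1 - (if y = 0 then 1 else 0) := by
      intro y; by_cases h : y = 0 <;> simp [h]
    rw [Finset.sum_congr rfl fun y _ => h1 y, Finset.sum_sub_distrib, Finset.sum_const,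
      Finset.sum_ite_eq' univ (0 : F) (fun _ => (1 : ZMod 2))]
    simp [card_cast_one hodd]
  · -- constraint c_i
    have hz : ((Fintype.card (Fstar F) : ℕ) : ZMod 2) = 0 := by
      rw [card_Fstar]; exact card_cast_zero hodd
    by_cases hi : i = 0
    · simp [Fintype.sum_sum_type, Fintype.sum_prod_type_right, adj, cw, Finset.sum_ite_eq,
        hi, Finset.card_univ, hz, card_cast_zero hodd]
    · simp [Fintype.sum_sum_type, Fintype.sum_prod_type_right, adj, cw, Finset.sum_ite_eq,
        hi]
  · -- constraint (a,b)'
    have hstep : (∑ v : VN F, if adj F v (Sum.inr (Sum.inr (a, b))) then cw F v else 0)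
        = (if a = 0 then (0 : ZMod 2) else 1)
          + ∑ q : F × Fstar F, (if ((b : F) = (q.2 : F) + q.1 * a ∧ ¬(q.1 = 0 ∧ a = 0))
              then (if q.1 = 0 then (1 : ZMod 2) else 0) else 0) := by
      simp [Fintype.sum_sum_type, adj, cw, Finset.sum_ite_eq]
    rw [hstep]
    have hsum : (∑ q : F × Fstar F, (if ((b : F) = (q.2 : F) + q.1 * a ∧ ¬(q.1 = 0 ∧ a = 0))
            then (if q.1 = 0 then (1 : ZMod 2) else 0) else 0))
        = (if a = 0 then (0 : ZMod 2) else 1) := by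
      by_cases ha : a = 0
      · have hz : ∀ q : F × Fstar F,
            (if ((b : F) = (q.2 : F) + q.1 * a ∧ ¬(q.1 = 0 ∧ a = 0))
              then (if q.1 = 0 then (1 : ZMod 2) else 0) else 0) = 0 := by
          intro q
          by_cases hc : (b : F) = (q.2 : F) + q.1 * a ∧ ¬(q.1 = 0 ∧ a = 0)
          · rw [if_pos hc, if_neg (fun h0 => hc.2 ⟨h0, ha⟩)]
          · rw [if_neg hc]
        rw [Finset.sum_congr rfl fun q _ => hz q, Finset.sum_const_zero, if_pos ha]
      · have hz : ∀ q : F × Fstar F,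
            (if ((b : F) = (q.2 : F) + q.1 * a ∧ ¬(q.1 = 0 ∧ a = 0))
              then (if q.1 = 0 then (1 : ZMod 2) else 0) else 0)
            = (if q = ((0 : F), b) then (1 : ZMod 2) else 0) := by
          intro q
          by_cases hq : q = ((0 : F), b)
          · subst hq
            rw [if_pos ⟨by ring, fun h => ha h.2⟩, if_pos rfl, if_pos rfl]
          · rw [if_neg hq]
            by_cases h0 : q.1 = 0
            · rw [if_neg]
              rintro ⟨hb, -⟩
              apply hq
              rw [h0, zero_mul, add_zero] at hb
              exact Prod.ext h0 (Subtype.ext hb.symm)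
            · by_cases hc : (b : F) = (q.2 : F) + q.1 * a ∧ ¬(q.1 = 0 ∧ a = 0)
              · rw [if_pos hc, if_neg h0]
              · rw [if_neg hc]
        rw [Finset.sum_congr rfl fun q _ => hz q,
          Finset.sum_ite_eq' univ ((0 : F), b) (fun _ => (1 : ZMod 2)),
          if_pos (Finset.mem_univ _), if_neg ha]
    rw [hsum]
    by_cases ha : a = 0
    · rw [if_pos ha, add_zero]
    · rw [if_neg ha]; decide

lemma cw_ne_zero (h1 : 1 < Fintype.card F) : cw F ≠ 0 := by
  classical
  have : Nontrivial F := Fintype.one_lt_card_iff_nontrivial.1 h1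
  obtain ⟨y, hy⟩ := exists_ne (0 : F)
  intro h
  have := congrFun h (V y)
  simp [V, cw, hy] at this

lemma hamWt_cw : hamWt (cw F) = 2 * (Fintype.card F - 1) := by
  classical
  have hf : Function.Bijective (fun z : Fstar F ⊕ Fstar F =>
      (match z with
        | Sum.inl y => ⟨V (y : F), by simp [V, cw, y.2]⟩
        | Sum.inr j => ⟨N 0 j, by simp [N, cw]⟩ : {v : VN F // cw F v ≠ 0})) := by
    constructor
    · rintro (y | j) (y' | j') h
      · simp only [Subtype.mk.injEq, V, Sum.inr.injEq, Sum.inl.injEq] at h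
        exact congrArg Sum.inl (Subtype.ext h)
      · simp [V, N] at h
      · simp [V, N] at h
      · simp only [Subtype.mk.injEq, N, Sum.inr.injEq, Prod.mk.injEq] at h
        exact congrArg Sum.inr (by simpa using h)
    · rintro ⟨v, hv⟩
      rcases v with u | y | ⟨i, j⟩
      · simp [cw] at hv
      · have hy : y ≠ 0 := by
          intro h; rw [h] at hv; simp [cw] at hv
        exact ⟨Sum.inl ⟨y, hy⟩, rfl⟩
      · have hi : i = 0 := by
          by_contra h; simp [cw, h] at hv
        subst hi
        exact ⟨Sum.inr j, rfl⟩
  rw [hamWt, ← Nat.card_eq_of_bijective _ hf, Nat.card_sum, Nat.card_eq_fintype_card,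
    card_Fstar]
  omega

end TypeIBProof
theorem stmt_5 (p s : ℕ) (hp : p.Prime) (hodd : p ≠ 2) (hs : 0 < s)
    (F : Type*) [Field F] [Fintype F] (hF : Fintype.card F = p ^ s) :
    -- the indicator vector is a codeword of the binary code of G(p,s)
    TypeIB.InCode F (ZMod 2) (cw F) ∧
    -- of Hamming weight 2(q − 1)
    hamWt (cw F) = 2 * (p ^ s - 1) ∧
    -- consequently q + 1 ≤ d_min ≤ 2(q − 1)
    p ^ s + 1 ≤ TypeIB.dmin F (ZMod 2) ∧
    TypeIB.dmin F (ZMod 2) ≤ 2 * (p ^ s - 1) := by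
  classical
  have hodd2 : ¬ 2 ∣ Fintype.card F := by
    rw [hF]
    intro hdvd
    exact hodd ((Nat.prime_dvd_prime_iff_eq Nat.prime_two hp).1
      (Nat.prime_two.dvd_of_dvd_pow hdvd)).symm
  have h1 : 1 < Fintype.card F := by
    rw [hF]
    exact Nat.one_lt_pow hs.ne' hp.one_lt
  have hin := TypeIBProof.cw_incode hodd2
  have hwt : hamWt (cw F) = 2 * (p ^ s - 1) := by
    rw [TypeIBProof.hamWt_cw, hF]
  have hne := TypeIBProof.cw_ne_zero h1
  refine ⟨hin, hwt, ?_, ?_⟩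
  · refine le_csInf ⟨2 * (p ^ s - 1), cw F, hin, hne, hwt⟩ ?_
    rintro w ⟨x, hx, hxne, rfl⟩
    rw [← hF]
    exact TypeIBProof.lower_bound x hx hxne
  · exact Nat.sInf_le ⟨cw F, hin, hne, hwt⟩
end

section
/- Delete from the Type II ℓ=3 graph P(p,s) the variable node r, the constraint nodes c_x and c_i (i ∈ F), the constraint node (0,0)', and all variable nodes adjacent to (0,0)' (namely (x,0) and (i,0) for every i ∈ F), together with all incident edges. The resulting bipartite graph has exactly q² − 1 variable nodes and q² − 1 constraint nodes, every vertex has degree exactly q = p^s, and its girth is 6. -/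
open scoped Classical

namespace TypeII3EG

/-- Variable nodes remaining in the Type II ℓ=3 graph after deleting `r`, `(x,0)` and the
`(i,0)` (i ∈ F): the nodes `(x,j)` with `j ≠ 0` and the nodes `(i,j)` with `i ∈ F`, `j ≠ 0`. -/
abbrev VE (F : Type*) [Field F] := {j : F // j ≠ 0} ⊕ (F × {j : F // j ≠ 0})

/-- Constraint nodes remaining after deleting `c_x`, the `c_i` (i ∈ F) and `(0,0)'`:
the nodes `(a,b)'` with `(a,b) ≠ (0,0)`. -/
abbrev CE (F : Type*) [Field F] := {ab : F × F // ab ≠ (0, 0)}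

/-- Adjacency induced from the Type II ℓ=3 graph `P(p,s)`:
`(x,j) ~ (j,b)'` for every `b`, and `(i,j) ~ (a, j + i·a)'` for every `a`. -/
def adj (F : Type*) [Field F] : VE F → CE F → Prop
  | Sum.inl j, ⟨(a, _), _⟩ => a = (j : F)
  | Sum.inr (i, j), ⟨(a, b), _⟩ => b = (j : F) + i * a

end TypeII3EG

/-- The simple graph on the disjoint union `V ⊕ C` associated to a bipartite adjacency
relation between variable nodes `V` and constraint nodes `C`. -/
def bip {V C : Type*} (adj : V → C → Prop) : SimpleGraph (V ⊕ C) where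
  Adj x y :=
    (∃ v c, x = Sum.inl v ∧ y = Sum.inr c ∧ adj v c) ∨
    (∃ v c, x = Sum.inr c ∧ y = Sum.inl v ∧ adj v c)
  symm := by
    refine ⟨?_⟩
    rintro x y (⟨v, c, hx, hy, h⟩ | ⟨v, c, hx, hy, h⟩)
    · exact Or.inr ⟨v, c, hy, hx, h⟩
    · exact Or.inl ⟨v, c, hy, hx, h⟩
  loopless := by
    refine ⟨?_⟩
    rintro x (⟨v, c, hx, hy, h⟩ | ⟨v, c, hx, hy, h⟩) <;> subst hx <;> simp at hy

section Aux

variable {F : Type*} [Field F]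

open TypeII3EG

lemma aux_card_ne {α : Type*} [Fintype α] (a : α) :
    Nat.card {x : α // x ≠ a} = Fintype.card α - 1 := by
  rw [Nat.card_eq_fintype_card]
  have h := Fintype.card_subtype_compl (fun x : α => x = a)
  simpa [Fintype.card_subtype_eq] using h

lemma common_neighbor {v v' : VE F} {c c' : CE F}
    (h1 : adj F v c) (h2 : adj F v c') (h3 : adj F v' c) (h4 : adj F v' c') :
    v = v' ∨ c = c' := by
  obtain ⟨⟨a, b⟩, hc⟩ := c
  obtain ⟨⟨a', b'⟩, hc'⟩ := c'
  match v, v' with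
  | Sum.inl j, Sum.inl j' =>
    left
    have e1 : a = (j : F) := h1
    have e3 : a = (j' : F) := h3
    exact congrArg Sum.inl (Subtype.ext (e1 ▸ e3))
  | Sum.inl j, Sum.inr (i', j') =>
    right
    have e1 : a = (j : F) := h1
    have e2 : a' = (j : F) := h2
    have e3 : b = (j' : F) + i' * a := h3
    have e4 : b' = (j' : F) + i' * a' := h4
    have ha : a = a' := e1.trans e2.symm
    exact Subtype.ext (by rw [Prod.mk.injEq]; exact ⟨ha, by rw [e3, e4, ha]⟩)
  | Sum.inr (i, j), Sum.inl j' =>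
    right
    have e1 : b = (j : F) + i * a := h1
    have e2 : b' = (j : F) + i * a' := h2
    have e3 : a = (j' : F) := h3
    have e4 : a' = (j' : F) := h4
    have ha : a = a' := e3.trans e4.symm
    exact Subtype.ext (by rw [Prod.mk.injEq]; exact ⟨ha, by rw [e1, e2, ha]⟩)
  | Sum.inr (i, j), Sum.inr (i', j') =>
    have e1 : b = (j : F) + i * a := h1
    have e2 : b' = (j : F) + i * a' := h2
    have e3 : b = (j' : F) + i' * a := h3
    have e4 : b' = (j' : F) + i' * a' := h4
    by_cases hii : i = i'
    · left
      subst hii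
      have : (j : F) = (j' : F) := by
        have h := e1.symm.trans e3
        linear_combination h
      exact congrArg Sum.inr (by rw [Prod.mk.injEq]; exact ⟨rfl, Subtype.ext this⟩)
    · right
      have ha : a = a' := by
        have k1 : (i - i') * a = (j' : F) - j := by
          have h := e1.symm.trans e3; linear_combination h
        have k2 : (i - i') * a' = (j' : F) - j := by
          have h := e2.symm.trans e4; linear_combination h
        exact mul_left_cancel₀ (sub_ne_zero.mpr hii) (k1.trans k2.symm)
      exact Subtype.ext (by rw [Prod.mk.injEq]; exact ⟨ha, by rw [e1, e2, ha]⟩)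

lemma bip_adj_isLeft {V C : Type*} {r : V → C → Prop} {x y : V ⊕ C}
    (h : (bip r).Adj x y) : x.isLeft = !y.isLeft := by
  rcases h with ⟨v, c, rfl, rfl, -⟩ | ⟨v, c, rfl, rfl, -⟩ <;> rfl

lemma bip_walk_even {V C : Type*} {r : V → C → Prop} {x y : V ⊕ C}
    (w : (bip r).Walk x y) : Even w.length ↔ x.isLeft = y.isLeft := by
  induction w with
  | nil => simp
  | cons h w ih =>
    rename_i x u y
    rw [SimpleGraph.Walk.length_cons, Nat.even_add_one, ih, bip_adj_isLeft h]
    cases u.isLeft <;> cases y.isLeft <;> simp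

end Aux

section Cycle

variable {F : Type*} [Field F]
open TypeII3EG SimpleGraph

lemma six_le_cycle (a : VE F ⊕ CE F) (w : (bip (adj F)).Walk a a) (hw : w.IsCycle) :
    6 ≤ w.length := by
  by_contra hlt
  push_neg at hlt
  have h3 := hw.three_le_length
  obtain ⟨k, hk⟩ := (bip_walk_even w).mpr rfl
  have h4 : w.length = 4 := by omega
  clear hlt h3 hk
  rcases w with _ | ⟨h1, w⟩
  · simp at h4
  rcases w with _ | ⟨h2, w⟩
  · simp at h4
  rcases w with _ | ⟨h3, w⟩
  · simp at h4
  rcases w with _ | ⟨h4', w⟩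
  · simp at h4
  rcases w with _ | ⟨h5, w⟩
  case cons.cons.cons.cons.cons =>
    simp [SimpleGraph.Walk.length_cons] at h4
  have hnd := hw.support_nodup
  simp only [Walk.support_cons, Walk.support_nil, List.tail_cons, List.nodup_cons,
    List.mem_cons, List.mem_singleton, List.not_mem_nil, or_false, not_or,
    List.nodup_nil, and_true] at hnd
  obtain ⟨⟨n12, n13, n1a⟩, ⟨n23, n2a⟩, n3a⟩ := hnd
  rcases h1 with ⟨v1, c1, rfl, rfl, had1⟩ | ⟨v1, c1, rfl, rfl, had1⟩
  · -- a = inl v1, x1 = inr c1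
    rcases h2 with ⟨v, c, heq, rfl, had2⟩ | ⟨v2, c, heq, rfl, had2⟩
    · simp at heq
    rw [Sum.inr.injEq] at heq; subst heq
    rcases h3 with ⟨v, c3, heq, rfl, had3⟩ | ⟨v, c3, heq, rfl, had3⟩
    swap
    · simp at heq
    rw [Sum.inl.injEq] at heq; subst heq
    rcases h4' with ⟨v, c, heq1, heq2, had4⟩ | ⟨v, c, heq1, heq2, had4⟩
    · simp at heq1
    rw [Sum.inr.injEq] at heq1; subst heq1
    rw [Sum.inl.injEq] at heq2; subst heq2
    have hv : v1 ≠ v2 := fun h => n2a (by rw [h])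
    have hc : c1 ≠ c3 := fun h => n13 (by rw [h])
    rcases common_neighbor had1 had4 had2 had3 with h | h
    · exact hv h
    · exact hc h
  · -- a = inr c1, x1 = inl v1
    rcases h2 with ⟨v, c2, heq, rfl, had2⟩ | ⟨v, c2, heq, rfl, had2⟩
    swap
    · simp at heq
    rw [Sum.inl.injEq] at heq; subst heq
    rcases h3 with ⟨v2, c, heq, rfl, had3⟩ | ⟨v2, c, heq, rfl, had3⟩
    · simp at heq
    rw [Sum.inr.injEq] at heq; subst heq
    rcases h4' with ⟨v, c, heq1, heq2, had4⟩ | ⟨v, c, heq1, heq2, had4⟩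
    swap
    · simp at heq1
    rw [Sum.inl.injEq] at heq1; subst heq1
    rw [Sum.inr.injEq] at heq2; subst heq2
    have hv : v1 ≠ v2 := fun h => n13 (by rw [h])
    have hc : c1 ≠ c2 := fun h => n2a (by rw [h])
    rcases common_neighbor had1 had2 had4 had3 with h | h
    · exact hv h
    · exact hc h

end Cycle

section Hex
variable {F : Type*} [Field F]
open TypeII3EG SimpleGraph

lemma egirth_le_six : (bip (adj F)).egirth ≤ 6 := by
  have h10 : (1 : F) ≠ 0 := one_ne_zero
  have h21 : (2 : F) ≠ 1 := fun h => one_ne_zero (by linear_combination h)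
  have h12 : (1 : F) ≠ 2 := fun h => h21 h.symm
  let V1 : VE F ⊕ CE F := Sum.inl (Sum.inl ⟨1, h10⟩)
  let C1 : VE F ⊕ CE F := Sum.inr ⟨(1, 1), by simp⟩
  let V2 : VE F ⊕ CE F := Sum.inl (Sum.inr (0, ⟨1, h10⟩))
  let C2 : VE F ⊕ CE F := Sum.inr ⟨(0, 1), by simp⟩
  let V3 : VE F ⊕ CE F := Sum.inl (Sum.inr (1, ⟨1, h10⟩))
  let C3 : VE F ⊕ CE F := Sum.inr ⟨(1, 2), by simp⟩
  have e1 : (bip (adj F)).Adj V1 C1 := Or.inl ⟨_, _, rfl, rfl, show (1:F) = 1 from rfl⟩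
  have e2 : (bip (adj F)).Adj C1 V2 := Or.inr ⟨_, _, rfl, rfl, show (1:F) = 1 + 0 * 1 by ring⟩
  have e3 : (bip (adj F)).Adj V2 C2 := Or.inl ⟨_, _, rfl, rfl, show (1:F) = 1 + 0 * 0 by ring⟩
  have e4 : (bip (adj F)).Adj C2 V3 := Or.inr ⟨_, _, rfl, rfl, show (1:F) = 1 + 1 * 0 by ring⟩
  have e5 : (bip (adj F)).Adj V3 C3 := Or.inl ⟨_, _, rfl, rfl, show (2:F) = 1 + 1 * 1 by ring⟩
  have e6 : (bip (adj F)).Adj C3 V1 := Or.inr ⟨_, _, rfl, rfl, show (1:F) = 1 from rfl⟩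
  let w : (bip (adj F)).Walk V1 V1 :=
    .cons e1 (.cons e2 (.cons e3 (.cons e4 (.cons e5 (.cons e6 .nil)))))
  have hd : List.Nodup [V1, C1, V2, C2, V3, C3] := by
    simp [V1, C1, V2, C2, V3, C3, Prod.ext_iff, Subtype.ext_iff, h10, h21, h12]
  have hcyc : w.IsCycle := by
    rw [Walk.isCycle_def]
    refine ⟨?_, by simp [w], ?_⟩
    · rw [Walk.isTrail_def]
      simp only [w, Walk.edges_cons, Walk.edges_nil]
      simp only [List.nodup_cons, List.mem_cons, List.not_mem_nil, or_false, List.nodup_nil,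
        and_true, Sym2.eq, Sym2.rel_iff', Prod.mk.injEq, Prod.swap_prod_mk, not_or]
      simp at hd
      tauto
    · show List.Nodup [C1, V2, C2, V3, C3, V1]
      simp at hd ⊢
      tauto
  have hle : (bip (adj F)).egirth ≤ (w.length : ℕ∞) := by
    apply iInf_le_of_le V1
    apply iInf_le_of_le w
    exact iInf_le _ hcyc
  simpa [w] using hle

end Hex

section Deg
variable {F : Type*} [Field F] [Fintype F]
open TypeII3EG

lemma deg_var (v : VE F) : Nat.card {c : CE F // adj F v c} = Fintype.card F := by
  rw [← Nat.card_eq_fintype_card]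
  apply Nat.card_congr
  rcases v with j | ⟨i, j⟩
  · exact
      { toFun := fun c => c.1.1.2
        invFun := fun b => ⟨⟨((j : F), b), fun h => j.2 (congrArg Prod.fst h)⟩, rfl⟩
        left_inv := by
          rintro ⟨⟨⟨a, b⟩, hab⟩, h⟩
          have ha : a = (j : F) := h
          subst ha
          rfl
        right_inv := fun b => rfl }
  · exact
      { toFun := fun c => c.1.1.1
        invFun := fun a =>
          ⟨⟨(a, (j : F) + i * a), fun h => by
              rw [Prod.mk.injEq] at h
              exact j.2 (by linear_combination h.2 - i * h.1)⟩, rfl⟩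
        left_inv := by
          rintro ⟨⟨⟨a, b⟩, hab⟩, h⟩
          have hb : b = (j : F) + i * a := h
          subst hb
          rfl
        right_inv := fun a => rfl }

lemma deg_con (c : CE F) : Nat.card {v : VE F // adj F v c} = Fintype.card F := by
  rw [← Nat.card_eq_fintype_card]
  apply Nat.card_congr
  obtain ⟨⟨a, b⟩, hab⟩ := c
  by_cases ha : a = 0
  · subst ha
    have hb : b ≠ 0 := fun h => hab (by rw [h])
    exact
      { toFun := fun v =>
          match v with
          | ⟨Sum.inl j, h⟩ => (j.2 (show (0:F) = (j:F) from h).symm).elim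
          | ⟨Sum.inr (i, j), _⟩ => i
        invFun := fun i => ⟨Sum.inr (i, ⟨b, hb⟩), show b = b + i * 0 by ring⟩
        left_inv := by
          rintro ⟨(j | ⟨i, j⟩), h⟩
          · exact (j.2 (show (0:F) = (j:F) from h).symm).elim
          · have hj : b = (j : F) + i * 0 := h
            apply Subtype.ext
            show Sum.inr (i, (⟨b, hb⟩ : {j : F // j ≠ 0})) = Sum.inr (i, j)
            rw [Sum.inr.injEq, Prod.mk.injEq]
            exact ⟨rfl, Subtype.ext (by linear_combination hj)⟩
        right_inv := fun i => rfl }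
  · exact
      { toFun := fun v =>
          match v with
          | ⟨Sum.inl j, h⟩ => b / a
          | ⟨Sum.inr (i, j), _⟩ => i
        invFun := fun i =>
          if h : b = i * a then ⟨Sum.inl ⟨a, ha⟩, rfl⟩
          else ⟨Sum.inr (i, ⟨b - i * a, sub_ne_zero.mpr h⟩),
            show b = (b - i * a) + i * a by ring⟩
        left_inv := by
          rintro ⟨(j | ⟨i, j⟩), h⟩
          · have hj : a = (j : F) := h
            have hcond : b = (b / a) * a := (div_mul_cancel₀ b ha).symm
            show (if hh : b = (b / a) * a then _ else _) = _
            rw [dif_pos hcond]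
            exact Subtype.ext (by rw [Sum.inl.injEq]; exact Subtype.ext hj)
          · have hj : b = (j : F) + i * a := h
            have hcond : ¬ b = i * a := fun hh => j.2 (by linear_combination hh - hj)
            show (if hh : b = i * a then _ else _) = _
            rw [dif_neg hcond]
            apply Subtype.ext
            show Sum.inr (i, _) = Sum.inr (i, j)
            rw [Sum.inr.injEq, Prod.mk.injEq]
            exact ⟨rfl, Subtype.ext (by linear_combination hj)⟩
        right_inv := by
          intro i
          by_cases h : b = i * a
          · beta_reduce
            rw [dif_pos h]
            show b / a = i
            rw [h, mul_div_cancel_right₀ _ ha]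
          · beta_reduce
            rw [dif_neg h] }

end Deg

theorem stmt_13 (p s : ℕ) (hp : p.Prime) (hs : 0 < s)
    (F : Type*) [Field F] [Fintype F] (hF : Fintype.card F = p ^ s) :
    -- exactly q² − 1 variable nodes and q² − 1 constraint nodes
    Nat.card (TypeII3EG.VE F) = (p ^ s) ^ 2 - 1 ∧
    Nat.card (TypeII3EG.CE F) = (p ^ s) ^ 2 - 1 ∧
    -- every variable node has degree exactly q
    (∀ v : TypeII3EG.VE F,
      Nat.card {c : TypeII3EG.CE F // TypeII3EG.adj F v c} = p ^ s) ∧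
    -- every constraint node has degree exactly q
    (∀ c : TypeII3EG.CE F,
      Nat.card {v : TypeII3EG.VE F // TypeII3EG.adj F v c} = p ^ s) ∧
    -- and the girth is 6
    (bip (TypeII3EG.adj F)).egirth = 6 := by
  have hq1 : 1 ≤ p ^ s := by rw [← hF]; exact Fintype.card_pos
  obtain ⟨m, hm⟩ : ∃ m, p ^ s = m + 1 := ⟨p ^ s - 1, by omega⟩
  refine ⟨?_, ?_, ?_, ?_, ?_⟩
  · rw [Nat.card_sum, Nat.card_prod, Nat.card_eq_fintype_card (α := F), hF,
      aux_card_ne (0 : F), hF, hm]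
    simp only [Nat.add_sub_cancel]
    exact Nat.eq_sub_of_add_eq (by ring)
  · rw [aux_card_ne ((0, 0) : F × F), Fintype.card_prod, hF, pow_two]
  · intro v; rw [deg_var v, hF]
  · intro c; rw [deg_con c, hF]
  · apply le_antisymm egirth_le_six
    rw [SimpleGraph.le_egirth]
    intro a w hw
    exact_mod_cast six_le_cycle a w hw
end
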